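/- Let α, β, γ, δ ∈ (0, π) satisfy cos α · cos γ = cos β · cos δ, and suppose there exist signs ε₁, ε₂, ε₃ ∈ {−1, 1} and an integer k such that α + ε₁β + ε₂γ + ε₃δ = 2πk. Then at least one of the following holds: (α = β and γ = δ), or (β = γ and δ = α), or (α + β = π and γ + δ = π), or (β + γ = π and δ + α = π). -/
import Mathlib

open Real

private lemma cosInjPM {x y : ℝ} (hx : |x| < π) (hy : |y| < π)
    (h : Real.cos x = Real.cos y) : x = y ∨ x = -y := by
  have habs : |x| = |y| := by
    refine Real.injOn_cos ⟨abs_nonneg _, hx.le⟩ ⟨abs_nonneg _, hy.le⟩ ?_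
    rwa [Real.cos_abs, Real.cos_abs]
  rcases abs_eq_abs.mp habs with h' | h' <;> [left; right] <;> exact h'

private lemma cosInj2pi {x y : ℝ} (hx0 : 0 < x) (hx2 : x < 2 * π) (hy0 : 0 ≤ y)
    (hy2 : y < 2 * π) (h : Real.cos x = Real.cos y) : x = y ∨ x + y = 2 * π := by
  have hpi := Real.pi_pos
  rcases eq_or_lt_of_le hy0 with hy0' | hy0'
  · exfalso
    rw [← hy0', Real.cos_zero] at h
    have := (Real.cos_eq_one_iff_of_lt_of_lt (by linarith) hx2).mp h
    linarith
  · by_cases hx : x ≤ π <;> by_cases hy : y ≤ π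
    · left
      exact Real.injOn_cos ⟨hx0.le, hx⟩ ⟨hy0, hy⟩ h
    · right
      have : Real.cos x = Real.cos (2 * π - y) := by
        rw [h, ← Real.cos_neg (2 * π - y)]
        rw [show -(2 * π - y) = y - (1:ℤ) * (2 * π) by push_cast; ring]
        rw [Real.cos_sub_int_mul_two_pi]
      have := Real.injOn_cos ⟨hx0.le, hx⟩ ⟨by linarith, by linarith⟩ this
      linarith
    · right
      have : Real.cos (2 * π - x) = Real.cos y := by
        rw [← h, ← Real.cos_neg (2 * π - x)]
        rw [show -(2 * π - x) = x - (1:ℤ) * (2 * π) by push_cast; ring]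
        rw [Real.cos_sub_int_mul_two_pi]
      have := Real.injOn_cos ⟨by linarith, by linarith⟩ ⟨hy0, hy⟩ this
      linarith
    · left
      have : Real.cos (2 * π - x) = Real.cos (2 * π - y) := by
        have ex : ∀ z : ℝ, Real.cos (2 * π - z) = Real.cos z := by
          intro z
          rw [← Real.cos_neg (2 * π - z)]
          rw [show -(2 * π - z) = z - (1:ℤ) * (2 * π) by push_cast; ring]
          rw [Real.cos_sub_int_mul_two_pi]
        rw [ex, ex, h]
      have := Real.injOn_cos ⟨by linarith, by linarith⟩ ⟨by linarith, by linarith⟩ this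
      linarith

/-- Classification: a non-elliptic orthodiagonal spherical quadrilateral is a deltoid
or an antideltoid. -/
theorem stmt_5 (α β γ δ : ℝ)
    (hα : α ∈ Set.Ioo 0 π) (hβ : β ∈ Set.Ioo 0 π) (hγ : γ ∈ Set.Ioo 0 π)
    (hδ : δ ∈ Set.Ioo 0 π)
    (orth : cos α * cos γ = cos β * cos δ)
    (hnonell : ∃ ε₁ ε₂ ε₃ : ℝ, (ε₁ = 1 ∨ ε₁ = -1) ∧ (ε₂ = 1 ∨ ε₂ = -1) ∧
      (ε₃ = 1 ∨ ε₃ = -1) ∧ ∃ k : ℤ, α + ε₁ * β + ε₂ * γ + ε₃ * δ = 2 * π * k) :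
    (α = β ∧ γ = δ) ∨ (β = γ ∧ δ = α) ∨
    (α + β = π ∧ γ + δ = π) ∨ (β + γ = π ∧ δ + α = π) := by
  obtain ⟨hα0, hα1⟩ := hα
  obtain ⟨hβ0, hβ1⟩ := hβ
  obtain ⟨hγ0, hγ1⟩ := hγ
  obtain ⟨hδ0, hδ1⟩ := hδ
  have hpi := Real.pi_pos
  -- product-to-sum identity
  have key : cos (α - γ) + cos (α + γ) = cos (β - δ) + cos (β + δ) := by
    rw [Real.cos_sub, Real.cos_add, Real.cos_sub, Real.cos_add]
    linarith [orth]
  -- From the sign condition, one of four cosine equalities holds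
  have main : (cos (α + γ) = cos (β + δ) ∧ cos (α - γ) = cos (β - δ)) ∨
      (cos (α + γ) = cos (β - δ) ∧ cos (α - γ) = cos (β + δ)) := by
    obtain ⟨ε₁, ε₂, ε₃, h1, h2, h3, k, hk⟩ := hnonell
    have ex : ∀ z : ℝ, Real.cos (2 * π * k - z) = Real.cos z := by
      intro z
      rw [show 2 * π * (k:ℝ) - z = (k:ℤ) * (2 * π) - z by push_cast; ring]
      exact Real.cos_int_mul_two_pi_sub z k
    have exn : ∀ z : ℝ, Real.cos (2 * π * k + z) = Real.cos z := by
      intro z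
      rw [show 2 * π * (k:ℝ) + z = z + (k:ℤ) * (2 * π) by push_cast; ring]
      exact Real.cos_add_int_mul_two_pi z k
    rcases h1 with rfl | rfl <;> rcases h2 with rfl | rfl <;> rcases h3 with rfl | rfl
    · -- α + β + γ + δ = 2πk : cos (α+γ) = cos (β+δ)
      left
      have e1 : cos (α + γ) = cos (β + δ) := by
        rw [show α + γ = 2 * π * k - (β + δ) by linarith, ex]
      exact ⟨e1, by linarith [key]⟩
    · -- α + β + γ - δ = 2πk : cos (α+γ) = cos (β-δ)
      right
      have e1 : cos (α + γ) = cos (β - δ) := by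
        rw [show α + γ = 2 * π * k - (β - δ) by linarith, ex]
      exact ⟨e1, by linarith [key]⟩
    · -- α + β - γ + δ = 2πk : cos (α-γ) = cos (β+δ)
      right
      have e2 : cos (α - γ) = cos (β + δ) := by
        rw [show α - γ = 2 * π * k - (β + δ) by linarith, ex]
      exact ⟨by linarith [key], e2⟩
    · -- α + β - γ - δ = 2πk : cos (α-γ) = cos (β-δ)
      left
      have e2 : cos (α - γ) = cos (β - δ) := by
        rw [show α - γ = 2 * π * k - (β - δ) by linarith, ex]
      exact ⟨by linarith [key], e2⟩
    · -- α - β + γ + δ = 2πk : cos (α+γ) = cos (β-δ)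
      right
      have e1 : cos (α + γ) = cos (β - δ) := by
        rw [show α + γ = 2 * π * k + (β - δ) by linarith, exn]
      exact ⟨e1, by linarith [key]⟩
    · -- α - β + γ - δ = 2πk : cos (α+γ) = cos (β+δ)
      left
      have e1 : cos (α + γ) = cos (β + δ) := by
        rw [show α + γ = 2 * π * k + (β + δ) by linarith, exn]
      exact ⟨e1, by linarith [key]⟩
    · -- α - β - γ + δ = 2πk : cos (α-γ) = cos (β-δ)
      left
      have e2 : cos (α - γ) = cos (β - δ) := by
        rw [show α - γ = 2 * π * k + (β - δ) by linarith, exn]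
      exact ⟨by linarith [key], e2⟩
    · -- α - β - γ - δ = 2πk : cos (α-γ) = cos (β+δ)
      right
      have e2 : cos (α - γ) = cos (β + δ) := by
        rw [show α - γ = 2 * π * k + (β + δ) by linarith, exn]
      exact ⟨by linarith [key], e2⟩
  rcases main with ⟨e1, e2⟩ | ⟨e1, e2⟩
  · -- good case
    have c1 := cosInj2pi (x := α + γ) (y := β + δ) (by linarith) (by linarith)
      (by linarith) (by linarith) e1
    have c2 := cosInjPM (x := α - γ) (y := β - δ)
      (abs_lt.mpr ⟨by linarith, by linarith⟩) (abs_lt.mpr ⟨by linarith, by linarith⟩) e2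
    rcases c1 with c1 | c1 <;> rcases c2 with c2 | c2
    · exact Or.inl ⟨by linarith, by linarith⟩
    · exact Or.inr (Or.inl ⟨by linarith, by linarith⟩)
    · exact Or.inr (Or.inr (Or.inr ⟨by linarith, by linarith⟩))
    · exact Or.inr (Or.inr (Or.inl ⟨by linarith, by linarith⟩))
  · -- bad case: contradiction
    exfalso
    have B1 : |β - δ| < β + δ := abs_lt.mpr ⟨by linarith, by linarith⟩
    have B2 : |β - δ| + (β + δ) < 2 * π := by
      rcases abs_cases (β - δ) with ⟨h', _⟩ | ⟨h', _⟩ <;> rw [h'] <;> linarith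
    have A1 : |α - γ| < α + γ := abs_lt.mpr ⟨by linarith, by linarith⟩
    have A2 : |α - γ| + (α + γ) < 2 * π := by
      rcases abs_cases (α - γ) with ⟨h', _⟩ | ⟨h', _⟩ <;> rw [h'] <;> linarith
    have e1' : cos (α + γ) = cos |β - δ| := by rw [Real.cos_abs]; exact e1
    have e2' : cos (β + δ) = cos |α - γ| := by rw [Real.cos_abs]; exact e2.symm
    have c1 := cosInj2pi (x := α + γ) (y := |β - δ|) (by linarith) (by linarith)
      (abs_nonneg _) (by linarith) e1'
    have c2 := cosInj2pi (x := β + δ) (y := |α - γ|) (by linarith) (by linarith)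
      (abs_nonneg _) (by linarith) e2'
    rcases c1 with c1 | c1 <;> rcases c2 with c2 | c2 <;> linarith
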